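/- Let Δ be an n×m real matrix with ‖Δa‖ < 1 for every unit vector a ∈ ℝ^m, and let Z* be an n-dimensional random vector with density f(z) = 2^m · φ_n(z) · Φ_m(Δ′z | I_m − Δ′Δ) on ℝ^n (the CFUSN_{n,m}(Δ) distribution). Then the random vector Y = exp(Z*) (componentwise exponential) has density f_Y(y) = 2^m · (∏_{i=1}^n y_i)^{-1} · φ_n(ln y) · Φ_m(Δ′ ln y | I_m − Δ′Δ) for y ∈ (0,∞)^n, where ln y denotes the componentwise logarithm. -/

import Mathlib

open MeasureTheory Matrix Real ProbabilityTheory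

noncomputable def stdNormalPdf {ι : Type*} [Fintype ι] (x : ι → ℝ) : ℝ :=
  (2 * π) ^ (-(Fintype.card ι : ℝ) / 2) * Real.exp (-(∑ i, x i ^ 2) / 2)

noncomputable def normalPdf {ι : Type*} [Fintype ι] [DecidableEq ι]
    (μ : ι → ℝ) (S : Matrix ι ι ℝ) (x : ι → ℝ) : ℝ :=
  (2 * π) ^ (-(Fintype.card ι : ℝ) / 2) * S.det ^ (-(1 : ℝ) / 2) *
    Real.exp (-((x - μ) ⬝ᵥ (S⁻¹ *ᵥ (x - μ))) / 2)

noncomputable def normalCdf {ι : Type*} [Fintype ι] [DecidableEq ι]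
    (μ : ι → ℝ) (S : Matrix ι ι ℝ) (z : ι → ℝ) : ℝ :=
  ∫ x in Set.Iic z, normalPdf μ S x

noncomputable def cfusnPdf {ι κ : Type*} [Fintype ι] [Fintype κ] [DecidableEq κ]
    (Δ : Matrix ι κ ℝ) (z : ι → ℝ) : ℝ :=
  2 ^ Fintype.card κ * stdNormalPdf z * normalCdf 0 (1 - Δᵀ * Δ) (Δᵀ *ᵥ z)

noncomputable def lcfusnPdf {ι κ : Type*} [Fintype ι] [Fintype κ] [DecidableEq κ]
    (Δ : Matrix ι κ ℝ) (y : ι → ℝ) : ℝ :=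
  if ∀ i, 0 < y i then
    2 ^ Fintype.card κ * (∏ i, y i)⁻¹ * stdNormalPdf (fun i => Real.log (y i)) *
      normalCdf 0 (1 - Δᵀ * Δ) (Δᵀ *ᵥ fun i => Real.log (y i))
  else 0

noncomputable def expDeriv (n : ℕ) (z : Fin n → ℝ) : (Fin n → ℝ) →L[ℝ] (Fin n → ℝ) :=
  ContinuousLinearMap.pi fun i => Real.exp (z i) • ContinuousLinearMap.proj i

theorem expDeriv_hasFDerivAt (n : ℕ) (z : Fin n → ℝ) :
    HasFDerivAt (fun x : Fin n → ℝ => fun i => Real.exp (x i)) (expDeriv n z) z := by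
  apply hasFDerivAt_pi.2
  intro i
  exact (Real.hasDerivAt_exp (z i)).comp_hasFDerivAt (f := fun x : Fin n → ℝ => x i) z (hasFDerivAt_apply i z)

theorem expDeriv_det (n : ℕ) (z : Fin n → ℝ) :
    (expDeriv n z).det = ∏ i, Real.exp (z i) := by
  have : (expDeriv n z : (Fin n → ℝ) →ₗ[ℝ] (Fin n → ℝ)) =
      Matrix.toLin (Pi.basisFun ℝ (Fin n)) (Pi.basisFun ℝ (Fin n))
        (Matrix.diagonal fun i => Real.exp (z i)) := by
    apply (Pi.basisFun ℝ (Fin n)).ext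
    intro j
    funext i
    simp [expDeriv, Matrix.toLin_apply, Matrix.mulVec, dotProduct,
      Matrix.diagonal, Pi.single_apply]
    rw [Finset.sum_eq_single j]
    · simp only [Pi.single_apply, smul_eq_mul]
      split <;> simp_all
    · intro b _ hb; simp [hb]
    · simp
  rw [ContinuousLinearMap.det, this, LinearMap.det_toLin, Matrix.det_diagonal]

/-- If `Z*` has the `CFUSN_{n,m}(Δ)` density, then `Y = exp(Z*)`
(componentwise) has the `LCFUSN_{n,m}(Δ)` density. -/
theorem lcfusn_density_of_cfusn
    {Ω : Type*} [MeasureSpace Ω] [IsProbabilityMeasure (volume : Measure Ω)]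
    (n m : ℕ) (Δ : Matrix (Fin n) (Fin m) ℝ)
    (hΔ : ∀ a : Fin m → ℝ, Real.sqrt (∑ j, a j ^ 2) = 1 →
      Real.sqrt (∑ i, (Δ *ᵥ a) i ^ 2) < 1)
    (Z : Ω → Fin n → ℝ) (hZ : Measurable Z)
    (hlaw : Measure.map Z volume =
      (volume : Measure (Fin n → ℝ)).withDensity fun z => ENNReal.ofReal (cfusnPdf Δ z)) :
    Measure.map (fun ω i => Real.exp (Z ω i)) volume =
      (volume : Measure (Fin n → ℝ)).withDensity fun y => ENNReal.ofReal (lcfusnPdf Δ y) := by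
  classical
  set E : (Fin n → ℝ) → (Fin n → ℝ) := fun z i => Real.exp (z i) with hEdef
  have hE : Measurable E :=
    measurable_pi_lambda _ fun i => Real.measurable_exp.comp (measurable_pi_apply i)
  have hinjE : Function.Injective E := by
    intro a b hab
    funext i
    exact Real.exp_injective (congrFun hab i)
  have hrange : Set.range E = {y : Fin n → ℝ | ∀ i, 0 < y i} := by
    ext y
    constructor
    · rintro ⟨z, rfl⟩ i; exact Real.exp_pos (z i)
    · intro hy
      exact ⟨fun i => Real.log (y i), funext fun i => Real.exp_log (hy i)⟩
  have hrangeMeas : MeasurableSet {y : Fin n → ℝ | ∀ i, 0 < y i} := by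
    have : {y : Fin n → ℝ | ∀ i, 0 < y i} = Set.pi Set.univ fun _ => Set.Ioi (0:ℝ) := by
      ext y; simp [Set.mem_pi]
    rw [this]
    exact MeasurableSet.univ_pi fun _ => measurableSet_Ioi
  ext A hA
  have hEZ : Measurable (fun ω i => Real.exp (Z ω i)) := hE.comp hZ
  rw [Measure.map_apply hEZ hA, withDensity_apply _ hA]
  have hpre : (fun ω i => Real.exp (Z ω i)) ⁻¹' A = Z ⁻¹' (E ⁻¹' A) := rfl
  rw [hpre, ← Measure.map_apply hZ (hE hA), hlaw, withDensity_apply _ (hE hA)]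
  have key : ∫⁻ y in E '' (E ⁻¹' A), ENNReal.ofReal (lcfusnPdf Δ y) =
      ∫⁻ z in E ⁻¹' A, ENNReal.ofReal |(expDeriv n z).det| *
        ENNReal.ofReal (lcfusnPdf Δ (E z)) := by
    exact lintegral_image_eq_lintegral_abs_det_fderiv_mul volume (hE hA)
      (fun z _ => (expDeriv_hasFDerivAt n z).hasFDerivWithinAt)
      (hinjE.injOn) _
  have himg : E '' (E ⁻¹' A) = A ∩ Set.range E := Set.image_preimage_eq_inter_range
  have hsplit : ∫⁻ y in A, ENNReal.ofReal (lcfusnPdf Δ y) =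
      ∫⁻ y in A ∩ Set.range E, ENNReal.ofReal (lcfusnPdf Δ y) := by
    rw [hrange]
    rw [← lintegral_indicator hA, ← lintegral_indicator (hA.inter hrangeMeas)]
    congr 1
    funext y
    by_cases hyA : y ∈ A
    · by_cases hyP : ∀ i, 0 < y i
      · rw [Set.indicator_of_mem hyA, Set.indicator_of_mem (Set.mem_inter hyA (Set.mem_setOf.2 hyP))]
      · rw [Set.indicator_of_mem hyA, Set.indicator_of_notMem (by simp [hyP, hyA])]
        simp [lcfusnPdf, hyP]
    · rw [Set.indicator_of_notMem hyA, Set.indicator_of_notMem (by simp [hyA])]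
  have hpt : ∀ z : Fin n → ℝ, ENNReal.ofReal |(expDeriv n z).det| *
      ENNReal.ofReal (lcfusnPdf Δ (E z)) = ENNReal.ofReal (cfusnPdf Δ z) := by
    intro z
    have hprod : (0:ℝ) < ∏ i, Real.exp (z i) :=
      Finset.prod_pos fun i _ => Real.exp_pos _
    rw [expDeriv_det, abs_of_pos hprod, ← ENNReal.ofReal_mul hprod.le]
    congr 1
    have hpos : ∀ i, 0 < E z i := fun i => Real.exp_pos _
    simp only [lcfusnPdf, hpos, if_pos, hEdef, Real.log_exp, Real.exp_pos, implies_true, if_true]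
    simp only [cfusnPdf]
    field_simp
  rw [hsplit, ← himg, key]
  exact (lintegral_congr fun z => (hpt z)).symm
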